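/- With $\kappa^*(T) = \frac{2IT + c^2 - \sqrt{4c^2 I T(1-T) + c^4}}{2(I+c^2)}$ for fixed $I \ge 1$ and $c > 0$, the function $T \mapsto \kappa^*(T)$ is strictly increasing on $(1/2, 1)$. -/

import Mathlib

/-- The transformed sensitivity value
`κ*(T) = (2IT + c² - √(4c²IT(1-T) + c⁴))/(2(I+c²))` is strictly increasing in
`T` on `(1/2, 1)`, for fixed `I ≥ 1` and `c > 0`. -/
theorem sensitivity_value_strictMono (I c : ℝ) (hI : 1 ≤ I) (hc : 0 < c) :
    StrictMonoOn
      (fun T : ℝ =>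
        (2 * I * T + c ^ 2 - Real.sqrt (4 * c ^ 2 * I * T * (1 - T) + c ^ 4)) /
          (2 * (I + c ^ 2)))
      (Set.Ioo (1 / 2 : ℝ) 1) := by
  have hI0 : (0:ℝ) < I := lt_of_lt_of_le one_pos hI
  have hden : (0:ℝ) < 2 * (I + c ^ 2) := by positivity
  -- derivative setup
  have key : ∀ T ∈ Set.Ioo (1/2 : ℝ) 1, HasDerivAt
      (fun T : ℝ =>
        (2 * I * T + c ^ 2 - Real.sqrt (4 * c ^ 2 * I * T * (1 - T) + c ^ 4)) /
          (2 * (I + c ^ 2)))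
      ((2 * I - (4 * c ^ 2 * I * (1 - 2 * T)) /
        (2 * Real.sqrt (4 * c ^ 2 * I * T * (1 - T) + c ^ 4))) / (2 * (I + c ^ 2))) T := by
    intro T hT
    have hT0 : 0 < T := lt_trans (by norm_num) hT.1
    have hT1 : 0 < 1 - T := by linarith [hT.2]
    have hg : (0:ℝ) < 4 * c ^ 2 * I * T * (1 - T) + c ^ 4 := by positivity
    have hgder : HasDerivAt (fun T : ℝ => 4 * c ^ 2 * I * T * (1 - T) + c ^ 4)
        (4 * c ^ 2 * I * (1 - 2 * T)) T := by
      have h1 : HasDerivAt (fun T : ℝ => 4 * c ^ 2 * I * T * (1 - T) + c ^ 4)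
          (4 * c ^ 2 * I * ((1 : ℝ) * (1 - T) + T * (0 - 1))) T := by
        have := (((hasDerivAt_id T).mul
          ((hasDerivAt_const T (1:ℝ)).sub (hasDerivAt_id T))).const_mul
          (4 * c ^ 2 * I)).add_const (c ^ 4)
        exact (this.congr_deriv (by simp only [Pi.sub_apply, id_eq])).congr_of_eventuallyEq
          (Filter.Eventually.of_forall fun x => by simp only [Pi.mul_apply, Pi.sub_apply, id_eq]; ring)
      convert h1 using 1; ring
    have hsq : HasDerivAt (fun T : ℝ => Real.sqrt (4 * c ^ 2 * I * T * (1 - T) + c ^ 4))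
        ((4 * c ^ 2 * I * (1 - 2 * T)) /
          (2 * Real.sqrt (4 * c ^ 2 * I * T * (1 - T) + c ^ 4))) T := by
      have := (Real.hasDerivAt_sqrt (x := 4 * c ^ 2 * I * T * (1 - T) + c ^ 4)
        (ne_of_gt hg)).comp T hgder
      refine this.congr_deriv ?_
      field_simp
    have hlin : HasDerivAt (fun T : ℝ => 2 * I * T + c ^ 2) (2 * I) T := by
      have := ((hasDerivAt_id T).const_mul (2 * I)).add_const (c ^ 2)
      refine this.congr_deriv ?_; ring
    exact (hlin.sub hsq).div_const _
  apply strictMonoOn_of_deriv_pos (convex_Ioo _ _)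
  · apply ContinuousOn.div_const
    apply ContinuousOn.sub
    · fun_prop
    · exact (Real.continuous_sqrt.comp (by fun_prop)).continuousOn
  · intro T hT
    rw [interior_Ioo] at hT
    rw [(key T hT).deriv]
    have hT0 : 0 < T := lt_trans (by norm_num) hT.1
    have hT1 : 0 < 1 - T := by linarith [hT.2]
    have hg : (0:ℝ) < 4 * c ^ 2 * I * T * (1 - T) + c ^ 4 := by positivity
    have hsqrt : 0 < Real.sqrt (4 * c ^ 2 * I * T * (1 - T) + c ^ 4) := Real.sqrt_pos.2 hg
    have hnum : (4 * c ^ 2 * I * (1 - 2 * T)) /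
        (2 * Real.sqrt (4 * c ^ 2 * I * T * (1 - T) + c ^ 4)) < 0 := by
      apply div_neg_of_neg_of_pos
      · have : 1 - 2 * T < 0 := by linarith [hT.1]
        have h4 : 0 < 4 * c ^ 2 * I := by positivity
        nlinarith
      · positivity
    apply div_pos _ hden
    nlinarith
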